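/- Let f_1, f_2 be a two-player troop placement on a disjoint union of edges in which for every edge either both endpoints are unoccupied, or both are occupied by different players. Suppose on exactly k edges the second player's endpoint has strictly more troops than the first player's endpoint ('captured' edges), and on all other occupied edges the troop counts on the two endpoints are equal. Then: (a) exactly the first player's endpoints of the k captured edges are vulnerable, and no second-player vertex is vulnerable; (b) if additionally the first player occupies k further edges with both endpoints to herself (one troop each suffices), then after all attacks resolve both players own equally many territories. -/

import Mathlib

/-- The matching graph on edges indexed by `ι`. -/
def matchingGraph (ι : Type*) : SimpleGraph (ι × Bool) where
  Adj a b := a.1 = b.1 ∧ a.2 ≠ b.2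
  symm := ⟨fun _ _ h => ⟨h.1.symm, h.2.symm⟩⟩
  loopless := ⟨fun _ h => h.2 rfl⟩

/- `oppSum G g v` is the total number of opposing troops (given by `g`) on the
neighbors of `v` in `G`. -/
open Classical in
noncomputable def oppSum {V : Type*} [Fintype V] (G : SimpleGraph V) (g : V → ℕ)
    (v : V) : ℕ :=
  ∑ u ∈ Finset.univ.filter (fun u => G.Adj v u), g u


open Classical in
lemma oppSum_matching {V : Type*} [Fintype V] (g : V × Bool → ℕ) (v : V × Bool) :
    oppSum (matchingGraph V) g v = g (v.1, !v.2) := by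
  unfold oppSum
  have h : Finset.univ.filter (fun u => (matchingGraph V).Adj v u) = {(v.1, !v.2)} := by
    ext u
    simp only [Finset.mem_filter, Finset.mem_univ, true_and, Finset.mem_singleton]
    simp only [matchingGraph]
    obtain ⟨x, c⟩ := v
    obtain ⟨a, b⟩ := u
    constructor
    · rintro ⟨h1, h2⟩
      simp only at h1 h2 ⊢
      subst h1
      cases c <;> cases b <;> simp_all
    · rintro h
      simp only [Prod.mk.injEq] at h
      obtain ⟨rfl, rfl⟩ := h
      refine ⟨rfl, ?_⟩
      cases c <;> simp
  rw [h, Finset.sum_singleton]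

/- STATEMENT 7: On a matching whose mirrored edges are indexed by `ι` (the first player on
the `false` endpoint, the second on the `true` endpoint) where exactly the edges of
`C` (with `|C| = k`) are "captured" (second player strictly outnumbers the first player
there) and all other edges have equal troop counts on their two endpoints, and where the
first player additionally owns `k` further edges (indexed by `κ`, one troop each):
(a) the vulnerable first-player vertices are exactly the first player's endpoints of the
captured edges, and no second-player vertex is vulnerable;
(b) after all attacks resolve, both players own equally many territories. -/
open Classical in
theorem stmt7 {ι κ : Type*} [Fintype ι] [Fintype κ] (k : ℕ)
    (f1 f2 : (ι ⊕ κ) × Bool → ℕ)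
    (C : Finset ι) (hC : C.card = k) (hκ : Fintype.card κ = k)
    (horient : ∀ i : ι, f2 (Sum.inl i, false) = 0 ∧ f1 (Sum.inl i, true) = 0)
    (hcap : ∀ i ∈ C, 0 < f1 (Sum.inl i, false) ∧
      f1 (Sum.inl i, false) < f2 (Sum.inl i, true))
    (heq : ∀ i ∉ C, f1 (Sum.inl i, false) = f2 (Sum.inl i, true))
    (hown : ∀ j : κ, f1 (Sum.inr j, false) = 1 ∧ f1 (Sum.inr j, true) = 0 ∧
      f2 (Sum.inr j, false) = 0 ∧ f2 (Sum.inr j, true) = 0) :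
    (∀ v, (0 < f1 v ∧ f1 v < oppSum (matchingGraph (ι ⊕ κ)) f2 v) ↔
        ∃ i ∈ C, v = (Sum.inl i, false)) ∧
    (∀ v, ¬ (0 < f2 v ∧ f2 v < oppSum (matchingGraph (ι ⊕ κ)) f1 v)) ∧
    (Finset.univ.filter fun v => 0 < f1 v).card
        - (Finset.univ.filter fun v =>
            0 < f1 v ∧ f1 v < oppSum (matchingGraph (ι ⊕ κ)) f2 v).card
      = (Finset.univ.filter fun v => 0 < f2 v).card := by
  have hopp : ∀ (g : (ι ⊕ κ) × Bool → ℕ) (x : ι ⊕ κ) (c : Bool),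
      oppSum (matchingGraph (ι ⊕ κ)) g (x, c) = g (x, !c) :=
    fun g x c => oppSum_matching g (x, c)
  have hiff : ∀ i : ι, 0 < f1 (Sum.inl i, false) ↔ 0 < f2 (Sum.inl i, true) := by
    intro i
    by_cases hi : i ∈ C
    · exact ⟨fun _ => lt_trans (hcap i hi).1 (hcap i hi).2, fun _ => (hcap i hi).1⟩
    · rw [heq i hi]
  have parta : ∀ v, (0 < f1 v ∧ f1 v < oppSum (matchingGraph (ι ⊕ κ)) f2 v) ↔
      ∃ i ∈ C, v = (Sum.inl i, false) := by
    rintro ⟨x, c⟩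
    rw [hopp]
    constructor
    · rintro ⟨hpos, hlt⟩
      cases x with
      | inl i =>
        cases c with
        | false =>
          refine ⟨i, ?_, rfl⟩
          by_contra hiC
          simp only [Bool.not_false] at hlt
          rw [heq i hiC] at hlt
          exact lt_irrefl _ hlt
        | true => simp [(horient i).2] at hpos
      | inr j =>
        cases c with
        | false =>
          simp only [Bool.not_false] at hlt
          rw [(hown j).1, (hown j).2.2.2] at hlt
          omega
        | true => simp [(hown j).2.1] at hpos
    · rintro ⟨i, hiC, h⟩
      simp only [Prod.mk.injEq] at h
      obtain ⟨rfl, rfl⟩ := h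
      exact ⟨(hcap i hiC).1, by simpa using (hcap i hiC).2⟩
  have partb : ∀ v, ¬ (0 < f2 v ∧ f2 v < oppSum (matchingGraph (ι ⊕ κ)) f1 v) := by
    rintro ⟨x, c⟩ ⟨hpos, hlt⟩
    rw [hopp] at hlt
    cases x with
    | inl i =>
      cases c with
      | false => simp [(horient i).1] at hpos
      | true =>
        simp only [Bool.not_true] at hlt
        by_cases hi : i ∈ C
        · exact absurd hlt (not_lt.2 (le_of_lt (hcap i hi).2))
        · rw [heq i hi] at hlt; exact lt_irrefl _ hlt
    | inr j =>
      cases c with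
      | false => simp [(hown j).2.2.1] at hpos
      | true => simp [(hown j).2.2.2] at hpos
  refine ⟨parta, partb, ?_⟩
  have hinj1 : Function.Injective (fun i : ι => ((Sum.inl i : ι ⊕ κ), false)) := by
    intro a b h; simpa using h
  have hinj2 : Function.Injective (fun i : ι => ((Sum.inl i : ι ⊕ κ), true)) := by
    intro a b h; simpa using h
  have hinj3 : Function.Injective (fun j : κ => ((Sum.inr j : ι ⊕ κ), false)) := by
    intro a b h; simpa using h
  have hset1 : Finset.univ.filter (fun v => 0 < f1 v)
      = (Finset.univ.filter (fun i : ι => 0 < f1 (Sum.inl i, false))).image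
          (fun i => ((Sum.inl i : ι ⊕ κ), false))
        ∪ Finset.univ.image (fun j : κ => ((Sum.inr j : ι ⊕ κ), false)) := by
    ext ⟨x, c⟩
    simp only [Finset.mem_filter, Finset.mem_univ, true_and, Finset.mem_union,
      Finset.mem_image, Prod.mk.injEq]
    cases x with
    | inl i =>
      cases c with
      | false =>
        constructor
        · intro h; exact Or.inl ⟨i, h, rfl, rfl⟩
        · rintro (⟨i', h, h1, -⟩ | ⟨j, h1, -⟩)
          · obtain rfl := Sum.inl_injective h1; exact h
          · simp at h1
      | true =>
        simp [(horient i).2]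
    | inr j =>
      cases c with
      | false =>
        simp only [(hown j).1]
        constructor
        · intro _; exact Or.inr ⟨j, rfl, trivial⟩
        · intro _; norm_num
      | true =>
        simp [(hown j).2.1]
  have hset2 : Finset.univ.filter (fun v => 0 < f2 v)
      = (Finset.univ.filter (fun i : ι => 0 < f1 (Sum.inl i, false))).image
          (fun i => ((Sum.inl i : ι ⊕ κ), true)) := by
    ext ⟨x, c⟩
    simp only [Finset.mem_filter, Finset.mem_univ, true_and, Finset.mem_image,
      Prod.mk.injEq]
    cases x with
    | inl i =>
      cases c with
      | false => simp [(horient i).1]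
      | true =>
        constructor
        · intro h; exact ⟨i, (hiff i).2 h, rfl, rfl⟩
        · rintro ⟨i', h, h1, -⟩
          obtain rfl := Sum.inl_injective h1; exact (hiff _).1 h
    | inr j =>
      cases c with
      | false => simp [(hown j).2.2.1]
      | true => simp [(hown j).2.2.2]
  have hvuln : (Finset.univ.filter fun v =>
      0 < f1 v ∧ f1 v < oppSum (matchingGraph (ι ⊕ κ)) f2 v)
      = C.image (fun i => ((Sum.inl i : ι ⊕ κ), false)) := by
    ext v
    simp only [Finset.mem_filter, Finset.mem_univ, true_and, Finset.mem_image,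
      parta v]
    constructor
    · rintro ⟨i, hi, rfl⟩; exact ⟨i, hi, rfl⟩
    · rintro ⟨i, hi, rfl⟩; exact ⟨i, hi, rfl⟩
  have hdisj : Disjoint
      ((Finset.univ.filter (fun i : ι => 0 < f1 (Sum.inl i, false))).image
        (fun i => ((Sum.inl i : ι ⊕ κ), false)))
      (Finset.univ.image (fun j : κ => ((Sum.inr j : ι ⊕ κ), false))) := by
    rw [Finset.disjoint_left]
    rintro v hv1 hv2
    simp only [Finset.mem_image] at hv1 hv2
    obtain ⟨i, -, rfl⟩ := hv1
    obtain ⟨j, -, h⟩ := hv2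
    simp at h
  rw [hset1, hset2, hvuln, Finset.card_union_of_disjoint hdisj,
    Finset.card_image_of_injective _ hinj1, Finset.card_image_of_injective _ hinj3,
    Finset.card_image_of_injective _ hinj2, Finset.card_image_of_injective _ hinj1,
    Finset.card_univ, hκ, hC]
  omega
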